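/- Consider n items each with a work value in [0, ŵ] and total work w = Σ w_i, assigned independently and uniformly at random to p bins. The expected maximum total work in any bin is at most ŵ times the expected maximum occupancy when placing ⌈w/ŵ⌉ balls into p bins. -/

import Mathlib

/-- Expected maximum bin load when placing `n` balls independently and
uniformly at random into `p` bins (average of the max load over all `p^n`
equally likely placements). -/
noncomputable def expMaxOcc (n p : ℕ) : ℝ :=
  (∑ f : Fin n → Fin p,
    (((Finset.univ.sup fun j : Fin p =>
      (Finset.univ.filter fun i : Fin n => f i = j).card) : ℕ) : ℝ)) / (p : ℝ) ^ n


open Finset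

noncomputable def occSum (m p : ℕ) : ℝ :=
  ∑ g : Fin m → Fin p,
    (((Finset.univ.sup fun j : Fin p =>
      (Finset.univ.filter fun i : Fin m => g i = j).card) : ℕ) : ℝ)

lemma sum_comp_inj {p m n : ℕ} (e : Fin m → Fin n) (he : Function.Injective e)
    (G : (Fin m → Fin p) → ℝ) :
    ∑ f : Fin n → Fin p, G (fun k => f (e k))
      = (p : ℝ) ^ (n - m) * ∑ g : Fin m → Fin p, G g := by
  classical
  set P : Fin n → Prop := fun x => x ∈ Set.range e with hP
  let E1 : ({x // P x} ⊕ {x // ¬ P x} → Fin p) ≃ (Fin n → Fin p) :=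
    Equiv.arrowCongr (Equiv.sumCompl P) (Equiv.refl _)
  let E2 : ({x // P x} ⊕ {x // ¬ P x} → Fin p) ≃ ({x // P x} → Fin p) × ({x // ¬ P x} → Fin p) :=
    Equiv.sumArrowEquivProdArrow _ _ _
  let E3 : ({x // P x} → Fin p) ≃ (Fin m → Fin p) :=
    Equiv.arrowCongr (Equiv.ofInjective e he).symm (Equiv.refl _)
  let EE : (Fin n → Fin p) ≃ (Fin m → Fin p) × ({x // ¬ P x} → Fin p) :=
    E1.symm.trans (E2.trans (Equiv.prodCongr E3 (Equiv.refl _)))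
  have hfst : ∀ f : Fin n → Fin p, (EE f).1 = fun k => f (e k) := by
    intro f; rfl
  calc ∑ f : Fin n → Fin p, G (fun k => f (e k))
      = ∑ f : Fin n → Fin p, G (EE f).1 := by
        refine Finset.sum_congr rfl fun f _ => ?_
        rw [hfst]
    _ = ∑ q : (Fin m → Fin p) × ({x // ¬ P x} → Fin p), G q.1 :=
        Fintype.sum_equiv EE _ _ (fun f => rfl)
    _ = ∑ g : Fin m → Fin p, ∑ _h : {x // ¬ P x} → Fin p, G g := by
        rw [Fintype.sum_prod_type]
    _ = (p : ℝ) ^ (n - m) * ∑ g : Fin m → Fin p, G g := by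
        rw [Finset.mul_sum]
        refine Finset.sum_congr rfl fun g _ => ?_
        rw [Finset.sum_const, Finset.card_univ, nsmul_eq_mul]
        congr 1
        have hc : Fintype.card {x // P x} = m := by
          have h1 : Fintype.card {x // P x} = Fintype.card (Fin m) :=
            Fintype.card_congr ((Equiv.ofInjective e he).symm)
          simpa using h1
        rw [Fintype.card_fun, Fintype.card_subtype_compl, hc, Fintype.card_fin,
          Fintype.card_fin]
        push_cast
        ring

noncomputable def Efun (n p : ℕ) (hp : 0 < p) (w : Fin n → ℝ) : ℝ :=
  ∑ f : Fin n → Fin p,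
    (Finset.univ.sup' (Finset.univ_nonempty_iff.mpr ⟨⟨0, hp⟩⟩)
      fun j : Fin p => ∑ i ∈ Finset.univ.filter fun i : Fin n => f i = j, w i)

lemma Efun_convex (n p : ℕ) (hp : 0 < p) (w1 w2 : Fin n → ℝ) (a b : ℝ)
    (ha : 0 ≤ a) (hb : 0 ≤ b) (hab : a + b = 1) :
    Efun n p hp (fun i => a * w1 i + b * w2 i) ≤ a * Efun n p hp w1 + b * Efun n p hp w2 := by
  classical
  unfold Efun
  rw [Finset.mul_sum, Finset.mul_sum, ← Finset.sum_add_distrib]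
  refine Finset.sum_le_sum fun f _ => ?_
  refine Finset.sup'_le _ _ fun j _ => ?_
  have h1 : ∑ i ∈ Finset.univ.filter (fun i : Fin n => f i = j), (a * w1 i + b * w2 i)
      = a * ∑ i ∈ Finset.univ.filter (fun i : Fin n => f i = j), w1 i
        + b * ∑ i ∈ Finset.univ.filter (fun i : Fin n => f i = j), w2 i := by
    rw [Finset.sum_add_distrib, Finset.mul_sum, Finset.mul_sum]
  rw [h1]
  have l1 := Finset.le_sup' (fun j : Fin p => ∑ i ∈ Finset.univ.filter fun i : Fin n => f i = j, w1 i) (Finset.mem_univ j)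
  have l2 := Finset.le_sup' (fun j : Fin p => ∑ i ∈ Finset.univ.filter fun i : Fin n => f i = j, w2 i) (Finset.mem_univ j)
  exact add_le_add (mul_le_mul_of_nonneg_left l1 ha) (mul_le_mul_of_nonneg_left l2 hb)

lemma support_bound (n p : ℕ) (hp : 0 < p) (wHat : ℝ) (hwHat : 0 ≤ wHat) (w : Fin n → ℝ)
    (hw : ∀ i, 0 ≤ w i ∧ w i ≤ wHat) {m : ℕ}
    (T : Finset (Fin n)) (hT : T.card = m) (hTw : ∀ i, i ∉ T → w i = 0) :
    Efun n p hp w ≤ wHat * ((p : ℝ) ^ (n - m) * occSum m p) := by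
  classical
  set e : Fin m → Fin n := fun k => T.orderEmbOfFin hT k with he
  have hei : Function.Injective e := fun x y h => (T.orderEmbOfFin hT).injective h
  set G : (Fin m → Fin p) → ℝ := fun g =>
    (((Finset.univ.sup fun j : Fin p =>
      (Finset.univ.filter fun i : Fin m => g i = j).card) : ℕ) : ℝ) with hG
  have hpt : ∀ f : Fin n → Fin p,
      (Finset.univ.sup' (Finset.univ_nonempty_iff.mpr ⟨⟨0, hp⟩⟩)
        fun j : Fin p => ∑ i ∈ Finset.univ.filter fun i : Fin n => f i = j, w i)
      ≤ wHat * G (fun k => f (e k)) := by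
    intro f
    refine Finset.sup'_le _ _ fun j _ => ?_
    set A : Finset (Fin n) := Finset.univ.filter fun i : Fin n => f i = j with hA
    have hsplit : ∑ i ∈ A, w i = ∑ i ∈ A ∩ T, w i + ∑ i ∈ A \ T, w i :=
      (Finset.sum_inter_add_sum_sdiff A T w).symm
    have hz : ∑ i ∈ A \ T, w i = 0 := by
      refine Finset.sum_eq_zero fun i hi => hTw i (Finset.mem_sdiff.mp hi).2
    have hb1 : ∑ i ∈ A ∩ T, w i ≤ (A ∩ T).card * wHat := by
      calc ∑ i ∈ A ∩ T, w i ≤ ∑ _i ∈ A ∩ T, wHat :=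
            Finset.sum_le_sum fun i _ => (hw i).2
        _ = (A ∩ T).card * wHat := by rw [Finset.sum_const, nsmul_eq_mul]
    have hcard : (A ∩ T).card = (Finset.univ.filter fun k : Fin m => f (e k) = j).card := by
      refine (Finset.card_bij (fun (k : Fin m) _ => e k) ?_ ?_ ?_).symm
      · intro k hk
        rw [Finset.mem_inter]
        refine ⟨?_, T.orderEmbOfFin_mem hT k⟩
        rw [hA, Finset.mem_filter]
        exact ⟨Finset.mem_univ _, (Finset.mem_filter.mp hk).2⟩
      · intro k1 _ k2 _ h; exact hei h
      · intro x hx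
        rcases Finset.mem_inter.mp hx with ⟨hxA, hxT⟩
        have : x ∈ Set.range (T.orderEmbOfFin hT) := by
          rw [Finset.range_orderEmbOfFin]; exact hxT
        rcases this with ⟨k, hk⟩
        refine ⟨k, ?_, hk⟩
        rw [Finset.mem_filter]
        refine ⟨Finset.mem_univ _, ?_⟩
        show f (e k) = j
        rw [he]
        simp only []
        rw [hk]
        exact (Finset.mem_filter.mp hxA).2
    have hsup : ((A ∩ T).card : ℝ) ≤ G (fun k => f (e k)) := by
      simp only [hG]
      rw [hcard]
      have : (Finset.univ.filter fun k : Fin m => f (e k) = j).card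
          ≤ Finset.univ.sup fun j : Fin p => (Finset.univ.filter fun k : Fin m => f (e k) = j).card :=
        Finset.le_sup (f := fun j : Fin p => (Finset.univ.filter fun k : Fin m => f (e k) = j).card) (Finset.mem_univ j)
      exact_mod_cast this
    calc ∑ i ∈ A, w i = ∑ i ∈ A ∩ T, w i := by rw [hsplit, hz, add_zero]
      _ ≤ (A ∩ T).card * wHat := hb1
      _ ≤ wHat * G (fun k => f (e k)) := by
          rw [mul_comm]
          exact mul_le_mul_of_nonneg_left hsup hwHat
  calc Efun n p hp w ≤ ∑ f : Fin n → Fin p, wHat * G (fun k => f (e k)) :=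
        Finset.sum_le_sum fun f _ => hpt f
    _ = wHat * ∑ f : Fin n → Fin p, G (fun k => f (e k)) := by rw [Finset.mul_sum]
    _ = wHat * ((p : ℝ) ^ (n - m) * occSum m p) := by
        rw [sum_comp_inj e hei G]; rfl

lemma ceil_le_n (n : ℕ) (wHat : ℝ) (hwHat : 0 < wHat) (w : Fin n → ℝ)
    (hw : ∀ i, 0 ≤ w i ∧ w i ≤ wHat) : ⌈(∑ i, w i) / wHat⌉₊ ≤ n := by
  rw [Nat.ceil_le, div_le_iff₀ hwHat]
  calc ∑ i, w i ≤ ∑ _i : Fin n, wHat := Finset.sum_le_sum fun i _ => (hw i).2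
    _ = n * wHat := by rw [Finset.sum_const, Finset.card_univ, Fintype.card_fin, nsmul_eq_mul]

lemma base_case (n p : ℕ) (hp : 0 < p) (wHat : ℝ) (hwHat : 0 < wHat) (w : Fin n → ℝ)
    (hw : ∀ i, 0 ≤ w i ∧ w i ≤ wHat)
    (hfrac : (Finset.univ.filter fun i : Fin n => 0 < w i ∧ w i < wHat).card ≤ 1) :
    Efun n p hp w ≤ wHat * ((p : ℝ) ^ (n - ⌈(∑ i, w i) / wHat⌉₊)
      * occSum ⌈(∑ i, w i) / wHat⌉₊ p) := by
  classical
  set m : ℕ := ⌈(∑ i, w i) / wHat⌉₊ with hm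
  set S : Finset (Fin n) := Finset.univ.filter fun i : Fin n => 0 < w i with hS
  set F : Finset (Fin n) := Finset.univ.filter fun i : Fin n => 0 < w i ∧ w i < wHat with hF
  have hFS : F ⊆ S := by
    intro x hx
    rw [hF, Finset.mem_filter] at hx
    rw [hS, Finset.mem_filter]
    exact ⟨hx.1, hx.2.1⟩
  have hSF : ∀ i ∈ S \ F, w i = wHat := by
    intro i hi
    rcases Finset.mem_sdiff.mp hi with ⟨hiS, hiF⟩
    rw [hS, Finset.mem_filter] at hiS
    rw [hF, Finset.mem_filter] at hiF
    push_neg at hiF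
    exact le_antisymm (hw i).2 (hiF (Finset.mem_univ i) hiS.2)
  have hsumS : ∑ i, w i = ∑ i ∈ S, w i := by
    refine (Finset.sum_subset (Finset.subset_univ S) ?_).symm
    intro x _ hx
    rw [hS, Finset.mem_filter] at hx
    push_neg at hx
    exact le_antisymm (hx (Finset.mem_univ x)) (hw x).1
  have hsplit : ∑ i ∈ S, w i = ∑ i ∈ S \ F, w i + ∑ i ∈ F, w i :=
    (Finset.sum_sdiff hFS).symm
  have hsdiff : ∑ i ∈ S \ F, w i = ((S \ F).card : ℝ) * wHat := by
    rw [Finset.sum_congr rfl hSF, Finset.sum_const, nsmul_eq_mul]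
  have hScard : S.card ≤ m := by
    rcases Finset.eq_empty_or_nonempty F with hFe | ⟨i0, hi0⟩
    · have h1 : ∑ i, w i = (S.card : ℝ) * wHat := by
        have hall : ∀ i ∈ S, w i = wHat := by
          intro i hi
          exact hSF i (by rw [hFe, Finset.sdiff_empty]; exact hi)
        rw [hsumS, Finset.sum_congr rfl hall, Finset.sum_const, nsmul_eq_mul]
      have h2 : (S.card : ℝ) ≤ (∑ i, w i) / wHat := by
        rw [h1, mul_div_cancel_right₀ _ (ne_of_gt hwHat)]
      calc S.card = ⌈(S.card : ℝ)⌉₊ := (Nat.ceil_natCast _).symm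
        _ ≤ m := Nat.ceil_mono h2
    · have hi0S : i0 ∈ S := hFS hi0
      have hScard1 : 1 ≤ S.card := Finset.card_pos.mpr ⟨i0, hi0S⟩
      have hw0 : 0 < w i0 := by
        rw [hF, Finset.mem_filter] at hi0; exact hi0.2.1
      have hFw : w i0 ≤ ∑ i ∈ F, w i :=
        Finset.single_le_sum (fun i _ => (hw i).1) hi0
      have hcd : (S.card : ℝ) - 1 ≤ ((S \ F).card : ℝ) := by
        rw [Finset.card_sdiff_of_subset hFS]
        have h1 : F.card ≤ S.card := Finset.card_le_card hFS
        rw [Nat.cast_sub h1]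
        have : (F.card : ℝ) ≤ 1 := by exact_mod_cast hfrac
        linarith
      have hlt : ((S.card - 1 : ℕ) : ℝ) < (∑ i, w i) / wHat := by
        rw [lt_div_iff₀ hwHat, Nat.cast_sub hScard1, Nat.cast_one]
        have : ((S.card : ℝ) - 1) * wHat ≤ ((S \ F).card : ℝ) * wHat :=
          mul_le_mul_of_nonneg_right hcd hwHat.le
        calc ((S.card : ℝ) - 1) * wHat ≤ ((S \ F).card : ℝ) * wHat := this
          _ < ((S \ F).card : ℝ) * wHat + w i0 := by linarith
          _ ≤ ∑ i ∈ S \ F, w i + ∑ i ∈ F, w i := by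
              rw [hsdiff]; linarith
          _ = ∑ i, w i := by rw [hsumS, hsplit]
      have : S.card - 1 < m := Nat.lt_ceil.mpr hlt
      omega
  have hmn : m ≤ n := ceil_le_n n wHat hwHat w hw
  obtain ⟨T, hST, hT⟩ := Finset.exists_superset_card_eq hScard
    (by rw [Fintype.card_fin]; exact hmn)
  refine support_bound n p hp wHat hwHat.le w hw T hT ?_
  intro i hi
  have hiS : i ∉ S := fun h => hi (hST h)
  rw [hS, Finset.mem_filter] at hiS
  push_neg at hiS
  exact le_antisymm (hiS (Finset.mem_univ i)) (hw i).1

lemma key_lemma (n p : ℕ) (hp : 0 < p) (wHat : ℝ) (hwHat : 0 < wHat) :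
    ∀ N (w : Fin n → ℝ), (∀ i, 0 ≤ w i ∧ w i ≤ wHat) →
      (Finset.univ.filter fun i : Fin n => 0 < w i ∧ w i < wHat).card ≤ N →
      Efun n p hp w ≤ wHat * ((p : ℝ) ^ (n - ⌈(∑ i, w i) / wHat⌉₊)
        * occSum ⌈(∑ i, w i) / wHat⌉₊ p) := by
  intro N
  induction N with
  | zero =>
    intro w hw h
    exact base_case n p hp wHat hwHat w hw (le_trans h (by norm_num))
  | succ N ih =>
    intro w hw h
    classical
    by_cases hone : (Finset.univ.filter fun i : Fin n => 0 < w i ∧ w i < wHat).card ≤ 1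
    · exact base_case n p hp wHat hwHat w hw hone
    · push_neg at hone
      obtain ⟨i, k, hi, hk, hik⟩ := Finset.one_lt_card_iff.mp hone
      rw [Finset.mem_filter] at hi hk
      obtain ⟨-, hi1, hi2⟩ := hi
      obtain ⟨-, hk1, hk2⟩ := hk
      set d : Fin n → ℝ := fun x => (if x = i then 1 else 0) - (if x = k then 1 else 0)
        with hd
      have hdi : d i = 1 := by simp [hd, hik]
      have hdk : d k = -1 := by simp [hd, hik.symm]
      have hdo : ∀ x, x ≠ i → x ≠ k → d x = 0 := by intro x h1 h2; simp [hd, h1, h2]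
      have hdsum : ∑ x, d x = 0 := by
        rw [hd]
        rw [Finset.sum_sub_distrib]
        simp
      set a : ℝ := max (-(w i)) (w k - wHat) with ha
      set b : ℝ := min (wHat - w i) (w k) with hb
      have ha0 : a < 0 := max_lt (by linarith) (by linarith)
      have hb0 : 0 < b := lt_min (by linarith) (by linarith)
      set wa : Fin n → ℝ := fun x => w x + a * d x with hwa
      set wb : Fin n → ℝ := fun x => w x + b * d x with hwb
      -- bounds
      have hwa_b : ∀ x, 0 ≤ wa x ∧ wa x ≤ wHat := by
        intro x
        by_cases hx : x = i
        · subst hx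
          rw [hwa]; simp only [hdi]
          constructor
          · have := le_max_left (-(w x)) (w x + w k - wHat - w x)
            have h1 : -(w x) ≤ a := le_max_left _ _
            linarith
          · linarith [(hw x).2]
        · by_cases hx2 : x = k
          · subst hx2
            rw [hwa]; simp only [hdk]
            have h1 : w x - wHat ≤ a := le_max_right _ _
            constructor
            · linarith
            · linarith
          · have hee : wa x = w x := by
              show w x + a * d x = w x
              rw [hdo x hx hx2]; ring
            rw [hee]; exact hw x
      have hwb_b : ∀ x, 0 ≤ wb x ∧ wb x ≤ wHat := by
        intro x
        by_cases hx : x = i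
        · subst hx
          rw [hwb]; simp only [hdi]
          have h1 : b ≤ wHat - w x := min_le_left _ _
          constructor
          · linarith [(hw x).1]
          · linarith
        · by_cases hx2 : x = k
          · subst hx2
            rw [hwb]; simp only [hdk]
            have h1 : b ≤ w x := min_le_right _ _
            constructor
            · linarith
            · linarith [(hw x).2]
          · have hee : wb x = w x := by
              show w x + b * d x = w x
              rw [hdo x hx hx2]; ring
            rw [hee]; exact hw x
      -- sums preserved
      have hsuma : ∑ x, wa x = ∑ x, w x := by
        rw [hwa]
        rw [Finset.sum_add_distrib, ← Finset.mul_sum, hdsum, mul_zero, add_zero]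
      have hsumb : ∑ x, wb x = ∑ x, w x := by
        rw [hwb]
        rw [Finset.sum_add_distrib, ← Finset.mul_sum, hdsum, mul_zero, add_zero]
      -- frac count decreases
      have hsubset : ∀ (v : Fin n → ℝ) (j0 : Fin n),
          j0 ∈ (Finset.univ.filter fun x : Fin n => 0 < w x ∧ w x < wHat) →
          (¬ (0 < v j0 ∧ v j0 < wHat)) →
          (∀ x, x ≠ i → x ≠ k → v x = w x) →
          (∀ x, 0 < v x ∧ v x < wHat → x = i ∨ x = k → x ∈ (Finset.univ.filter fun y : Fin n => 0 < w y ∧ w y < wHat)) →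
          (Finset.univ.filter fun x : Fin n => 0 < v x ∧ v x < wHat).card ≤ N := by
        intro v j0 hj0 hj0v hoth hik2
        have hsub : (Finset.univ.filter fun x : Fin n => 0 < v x ∧ v x < wHat)
            ⊆ (Finset.univ.filter fun x : Fin n => 0 < w x ∧ w x < wHat).erase j0 := by
          intro x hx
          rw [Finset.mem_filter] at hx
          have hxne : x ≠ j0 := by
            rintro rfl; exact hj0v hx.2
          refine Finset.mem_erase.mpr ⟨hxne, ?_⟩
          by_cases h1 : x = i
          · exact hik2 x hx.2 (Or.inl h1)
          · by_cases h2 : x = k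
            · exact hik2 x hx.2 (Or.inr h2)
            · rw [Finset.mem_filter]
              refine ⟨Finset.mem_univ _, ?_⟩
              rw [← hoth x h1 h2]
              exact hx.2
        calc (Finset.univ.filter fun x : Fin n => 0 < v x ∧ v x < wHat).card
            ≤ ((Finset.univ.filter fun x : Fin n => 0 < w x ∧ w x < wHat).erase j0).card :=
              Finset.card_le_card hsub
          _ = (Finset.univ.filter fun x : Fin n => 0 < w x ∧ w x < wHat).card - 1 :=
              Finset.card_erase_of_mem hj0
          _ ≤ N := by omega
      have hiF : i ∈ (Finset.univ.filter fun x : Fin n => 0 < w x ∧ w x < wHat) :=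
        Finset.mem_filter.mpr ⟨Finset.mem_univ _, hi1, hi2⟩
      have hkF : k ∈ (Finset.univ.filter fun x : Fin n => 0 < w x ∧ w x < wHat) :=
        Finset.mem_filter.mpr ⟨Finset.mem_univ _, hk1, hk2⟩
      have hikmem : ∀ (v : Fin n → ℝ), ∀ x, 0 < v x ∧ v x < wHat → x = i ∨ x = k →
          x ∈ (Finset.univ.filter fun y : Fin n => 0 < w y ∧ w y < wHat) := by
        rintro v x - (rfl | rfl)
        exacts [hiF, hkF]
      have hfa : (Finset.univ.filter fun x : Fin n => 0 < wa x ∧ wa x < wHat).card ≤ N := by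
        rcases max_choice (-(w i)) (w k - wHat) with hmc | hmc
        · refine hsubset wa i hiF ?_ ?_ (hikmem wa)
          · rw [hwa]; simp only [hdi]
            rw [ha, hmc]
            intro hcon
            linarith [hcon.1]
          · intro x h1 h2
            show w x + a * d x = w x
            rw [hdo x h1 h2]; ring
        · refine hsubset wa k hkF ?_ ?_ (hikmem wa)
          · rw [hwa]; simp only [hdk]
            rw [ha, hmc]
            intro hcon
            linarith [hcon.2]
          · intro x h1 h2
            show w x + a * d x = w x
            rw [hdo x h1 h2]; ring
      have hfb : (Finset.univ.filter fun x : Fin n => 0 < wb x ∧ wb x < wHat).card ≤ N := by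
        rcases min_choice (wHat - w i) (w k) with hmc | hmc
        · refine hsubset wb i hiF ?_ ?_ (hikmem wb)
          · rw [hwb]; simp only [hdi]
            rw [hb, hmc]
            intro hcon
            linarith [hcon.2]
          · intro x h1 h2
            show w x + b * d x = w x
            rw [hdo x h1 h2]; ring
        · refine hsubset wb k hkF ?_ ?_ (hikmem wb)
          · rw [hwb]; simp only [hdk]
            rw [hb, hmc]
            intro hcon
            linarith [hcon.1]
          · intro x h1 h2
            show w x + b * d x = w x
            rw [hdo x h1 h2]; ring
      -- convex combination
      have hba : 0 < b - a := by linarith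
      set lam : ℝ := b / (b - a) with hlam
      set mu : ℝ := -a / (b - a) with hmu
      have hlam0 : 0 ≤ lam := div_nonneg hb0.le hba.le
      have hmu0 : 0 ≤ mu := div_nonneg (by linarith) hba.le
      have hlm : lam + mu = 1 := by
        rw [hlam, hmu]
        field_simp
        ring
      have hz : lam * a + mu * b = 0 := by
        rw [hlam, hmu]
        field_simp
        ring
      have hcomb : w = fun x => lam * wa x + mu * wb x := by
        funext x
        rw [hwa, hwb]
        show w x = lam * (w x + a * d x) + mu * (w x + b * d x)
        linear_combination (-(w x)) * hlm + (-(d x)) * hz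
      have hEa := ih wa hwa_b hfa
      have hEb := ih wb hwb_b hfb
      rw [hsuma] at hEa
      rw [hsumb] at hEb
      have hconv : Efun n p hp w ≤ lam * Efun n p hp wa + mu * Efun n p hp wb := by
        calc Efun n p hp w = Efun n p hp (fun x => lam * wa x + mu * wb x) := by rw [← hcomb]
          _ ≤ lam * Efun n p hp wa + mu * Efun n p hp wb :=
            Efun_convex n p hp wa wb lam mu hlam0 hmu0 hlm
      calc Efun n p hp w ≤ lam * Efun n p hp wa + mu * Efun n p hp wb := hconv
        _ ≤ lam * (wHat * ((p : ℝ) ^ (n - ⌈(∑ i, w i) / wHat⌉₊) * occSum ⌈(∑ i, w i) / wHat⌉₊ p))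
            + mu * (wHat * ((p : ℝ) ^ (n - ⌈(∑ i, w i) / wHat⌉₊) * occSum ⌈(∑ i, w i) / wHat⌉₊ p)) :=
            add_le_add (mul_le_mul_of_nonneg_left hEa hlam0) (mul_le_mul_of_nonneg_left hEb hmu0)
        _ = wHat * ((p : ℝ) ^ (n - ⌈(∑ i, w i) / wHat⌉₊) * occSum ⌈(∑ i, w i) / wHat⌉₊ p) := by
            rw [← add_mul, hlm, one_mul]


theorem weighted_max_load_majorization (n p : ℕ) (hp : 0 < p)
    (w : Fin n → ℝ) (wHat : ℝ) (hwHat : 0 < wHat)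
    (hw : ∀ i, 0 ≤ w i ∧ w i ≤ wHat) :
    (∑ f : Fin n → Fin p,
        (Finset.univ.sup' (Finset.univ_nonempty_iff.mpr ⟨⟨0, hp⟩⟩)
          fun j : Fin p => ∑ i ∈ Finset.univ.filter fun i : Fin n => f i = j, w i))
        / (p : ℝ) ^ n
      ≤ wHat * expMaxOcc ⌈(∑ i, w i) / wHat⌉₊ p := by
  classical
  set m : ℕ := ⌈(∑ i, w i) / wHat⌉₊ with hm
  have hkey := key_lemma n p hp wHat hwHat
    (Finset.univ.filter fun i : Fin n => 0 < w i ∧ w i < wHat).card w hw le_rfl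
  rw [← hm] at hkey
  have hmn : m ≤ n := ceil_le_n n wHat hwHat w hw
  have hp0 : (0 : ℝ) < (p : ℝ) := by exact_mod_cast hp
  have hpn : (0 : ℝ) < (p : ℝ) ^ n := pow_pos hp0 n
  have hpm : ((p : ℝ) ^ m) ≠ 0 := ne_of_gt (pow_pos hp0 m)
  have hpnm : ((p : ℝ) ^ (n - m)) ≠ 0 := ne_of_gt (pow_pos hp0 (n - m))
  have hpow : (p : ℝ) ^ (n - m) * (p : ℝ) ^ m = (p : ℝ) ^ n := by
    rw [← pow_add, Nat.sub_add_cancel hmn]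
  have hE : wHat * expMaxOcc m p = wHat * (occSum m p / (p : ℝ) ^ m) := rfl
  have hEw : (∑ f : Fin n → Fin p,
        (Finset.univ.sup' (Finset.univ_nonempty_iff.mpr ⟨⟨0, hp⟩⟩)
          fun j : Fin p => ∑ i ∈ Finset.univ.filter fun i : Fin n => f i = j, w i))
      = Efun n p hp w := rfl
  rw [hEw, hE]
  calc Efun n p hp w / (p : ℝ) ^ n
      ≤ (wHat * ((p : ℝ) ^ (n - m) * occSum m p)) / (p : ℝ) ^ n := by gcongr
    _ = wHat * (occSum m p / (p : ℝ) ^ m) := by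
        rw [← hpow]
        field_simp
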